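/- Let G be an m×n real matrix and P̃ > 0, and suppose the largest eigenvalue λmax of the symmetric matrix GᵀG is simple (has multiplicity one). Then every n×n real symmetric positive semidefinite matrix Q with tr(Q) = P̃ that maximizes tr(G Q Gᵀ) over this constraint set has rank one; specifically, Q = P̃·q qᵀ where q is a unit-norm eigenvector of GᵀG associated with λmax. -/

import Mathlib

open Matrix

section Aux
variable {m n : ℕ}

lemma aux_mul_vecMulVec (A : Matrix (Fin m) (Fin n) ℝ) (w v : Fin n → ℝ) :
    A * vecMulVec w v = vecMulVec (A *ᵥ w) v := by
  ext i j
  simp [mul_apply, vecMulVec_apply, mulVec, dotProduct, Finset.sum_mul, mul_assoc]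

lemma aux_vecMulVec_mul (B : Matrix (Fin n) (Fin m) ℝ) (w v : Fin n → ℝ) :
    vecMulVec w v * B = vecMulVec w (v ᵥ* B) := by
  ext i j
  simp [mul_apply, vecMulVec_apply, vecMul, dotProduct, Finset.mul_sum, mul_assoc,
    mul_comm, mul_left_comm]

lemma aux_trace_vecMulVec (w v : Fin n → ℝ) :
    (vecMulVec w v).trace = w ⬝ᵥ v := by
  simp [Matrix.trace, Matrix.diag, vecMulVec_apply, dotProduct]

lemma aux_diag_nonneg {R : Matrix (Fin n) (Fin n) ℝ} (hR : R.PosSemidef) (i : Fin n) :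
    0 ≤ R i i := by
  have := hR.dotProduct_mulVec_nonneg (Pi.single i 1)
  simpa [dotProduct, mulVec, Pi.single_apply] using this

lemma aux_trace_diagonal_mul (d : Fin n → ℝ) (M : Matrix (Fin n) (Fin n) ℝ) :
    (diagonal d * M).trace = ∑ i, d i * M i i := by
  simp [Matrix.trace, Matrix.diag, diagonal_mul]

end Aux


/-- If the largest eigenvalue `λmax` of `GᵀG` is simple, then every
`n × n` real symmetric PSD matrix `Q` with `tr Q = P̃` maximizing `tr (G Q Gᵀ)` over
this constraint set has rank one; specifically `Q = P̃ · q qᵀ` where `q` is a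
unit-norm eigenvector of `GᵀG` associated with `λmax`. -/
theorem stmt_2 {m n : ℕ} (G : Matrix (Fin m) (Fin n) ℝ) (Ptil : ℝ) (hP : 0 < Ptil)
    (lmax : ℝ) (hGG : (Gᵀ * G).IsHermitian)
    (hlmax : IsGreatest (Set.range hGG.eigenvalues) lmax)
    (hsimple : ∃! i : Fin n, hGG.eigenvalues i = lmax)
    (Q : Matrix (Fin n) (Fin n) ℝ) (hQ : Q.PosSemidef) (hQtr : Q.trace = Ptil)
    (hQmax : ∀ Q' : Matrix (Fin n) (Fin n) ℝ, Q'.PosSemidef → Q'.trace = Ptil →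
      (G * Q' * Gᵀ).trace ≤ (G * Q * Gᵀ).trace) :
    Q.rank = 1 ∧
    ∃ q : Fin n → ℝ, q ⬝ᵥ q = 1 ∧ (Gᵀ * G) *ᵥ q = lmax • q ∧
      Q = Ptil • vecMulVec q q := by
  classical
  set U : Matrix (Fin n) (Fin n) ℝ := (hGG.eigenvectorUnitary : Matrix (Fin n) (Fin n) ℝ)
    with hUdef
  set lam : Fin n → ℝ := hGG.eigenvalues with hlamdef
  have hUmem := hGG.eigenvectorUnitary.2
  have hUU : U * star U = 1 := mem_unitaryGroup_iff.mp hUmem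
  have hUU' : star U * U = 1 := mem_unitaryGroup_iff'.mp hUmem
  have hspec : Gᵀ * G = U * diagonal lam * star U := by
    have := hGG.spectral_theorem
    simpa [RCLike.ofReal_real_eq_id] using this
  -- key trace formula
  have key : ∀ Q' : Matrix (Fin n) (Fin n) ℝ,
      (G * Q' * Gᵀ).trace = ∑ i, lam i * (star U * Q' * U) i i := by
    intro Q'
    have h1 : (G * Q' * Gᵀ).trace = ((Gᵀ * G) * Q').trace := by
      rw [Matrix.trace_mul_cycle]
    rw [h1, hspec]
    have h2 : U * diagonal lam * star U * Q' = U * (diagonal lam * star U * Q') := by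
      simp only [Matrix.mul_assoc]
    rw [h2, Matrix.trace_mul_comm]
    have h3 : diagonal lam * star U * Q' * U = diagonal lam * (star U * Q' * U) := by
      simp only [Matrix.mul_assoc]
    rw [h3, aux_trace_diagonal_mul]
  -- conjugated matrix facts
  have hconjPSD : ∀ Q' : Matrix (Fin n) (Fin n) ℝ, Q'.PosSemidef →
      (star U * Q' * U).PosSemidef := fun Q' h => by
    have := h.conjTranspose_mul_mul_same U
    simpa [star_eq_conjTranspose] using this
  have hconjtr : ∀ Q' : Matrix (Fin n) (Fin n) ℝ,
      (star U * Q' * U).trace = Q'.trace := fun Q' => by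
    rw [Matrix.trace_mul_cycle, hUU, Matrix.one_mul]
  have htrdiag : ∀ Q' : Matrix (Fin n) (Fin n) ℝ,
      (star U * Q' * U).trace = ∑ i, (star U * Q' * U) i i := by
    intro Q'; rfl
  -- the top eigenvector
  obtain ⟨i0, hi0, hi0u⟩ := hsimple
  set q : Fin n → ℝ := fun k => hGG.eigenvectorBasis i0 k with hqdef
  have hUq : ∀ k, U k i0 = q k := fun k => rfl
  have hq1 : q ⬝ᵥ q = 1 := by
    have := congrFun (congrFun hUU' i0) i0
    simpa [mul_apply, dotProduct, one_apply, star_eq_conjTranspose, conjTranspose_apply,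
      hUq] using this
  have heig : (Gᵀ * G) *ᵥ q = lmax • q := by
    have h : (Gᵀ * G) *ᵥ q = lam i0 • q := hGG.mulVec_eigenvectorBasis i0
    rw [hi0] at h
    exact h
  -- candidate matrix
  set Q0 : Matrix (Fin n) (Fin n) ℝ := Ptil • vecMulVec q q with hQ0def
  have hvPSD : (vecMulVec q q).PosSemidef := by
    have := posSemidef_conjTranspose_mul_self (replicateRow Unit q)
    convert this using 1
    ext i j
    simp [vecMulVec_apply, mul_apply, conjTranspose_apply, replicateRow_apply, mul_comm]
  have hQ0PSD : Q0.PosSemidef := by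
    refine PosSemidef.of_dotProduct_mulVec_nonneg ?_ ?_
    · show (Ptil • vecMulVec q q)ᴴ = Ptil • vecMulVec q q
      rw [conjTranspose_smul, star_trivial, hvPSD.1]
    · intro x
      have h := hvPSD.dotProduct_mulVec_nonneg x
      unfold Q0
      rw [Matrix.smul_mulVec, dotProduct_smul]
      exact mul_nonneg hP.le h
  have hQ0tr : Q0.trace = Ptil := by
    unfold Q0
    rw [Matrix.trace_smul, aux_trace_vecMulVec, hq1]
    simp
  have hQ0val : (G * Q0 * Gᵀ).trace = lmax * Ptil := by
    have h1 : (G * Q0 * Gᵀ).trace = ((Gᵀ * G) * Q0).trace := by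
      rw [Matrix.trace_mul_cycle]
    rw [h1]
    unfold Q0
    rw [Matrix.mul_smul, Matrix.trace_smul, aux_mul_vecMulVec, heig, aux_trace_vecMulVec]
    simp [hq1, mul_comm]
  -- the conjugated optimum
  set R : Matrix (Fin n) (Fin n) ℝ := star U * Q * U with hRdef
  have hRPSD : R.PosSemidef := hconjPSD Q hQ
  have hRtr : R.trace = Ptil := by rw [hRdef, hconjtr, hQtr]
  have hRsum : ∑ i, R i i = Ptil := by
    rw [← hRtr]; rfl
  have hupper : ∑ i, lam i * R i i ≤ lmax * Ptil := by
    calc ∑ i, lam i * R i i ≤ ∑ i, lmax * R i i := by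
          refine Finset.sum_le_sum fun i _ => ?_
          exact mul_le_mul_of_nonneg_right (hlmax.2 ⟨i, rfl⟩) (aux_diag_nonneg hRPSD i)
      _ = lmax * Ptil := by rw [← Finset.mul_sum, hRsum]
  have hlower : lmax * Ptil ≤ (G * Q * Gᵀ).trace := by
    rw [← hQ0val]; exact hQmax Q0 hQ0PSD hQ0tr
  have heq : ∑ i, lam i * R i i = lmax * Ptil := by
    have := key Q
    have h := le_antisymm hupper (by rw [← this]; exact hlower)
    exact h
  -- each off-top diagonal entry of R vanishes
  have hzero : ∀ i, i ≠ i0 → R i i = 0 := by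
    intro i hi
    have hsum0 : ∑ j, (lmax - lam j) * R j j = 0 := by
      have : ∑ j, (lmax - lam j) * R j j
          = lmax * (∑ j, R j j) - ∑ j, lam j * R j j := by
        rw [Finset.mul_sum, ← Finset.sum_sub_distrib]
        refine Finset.sum_congr rfl fun j _ => by ring
      rw [this, hRsum, heq, sub_self]
    have hnn : ∀ j ∈ Finset.univ, 0 ≤ (lmax - lam j) * R j j := fun j _ =>
      mul_nonneg (sub_nonneg.mpr (hlmax.2 ⟨j, rfl⟩)) (aux_diag_nonneg hRPSD j)
    have hall := (Finset.sum_eq_zero_iff_of_nonneg hnn).mp hsum0 i (Finset.mem_univ i)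
    have hlt : lam i < lmax := lt_of_le_of_ne (hlmax.2 ⟨i, rfl⟩) (fun h => hi (hi0u i h))
    have : lmax - lam i ≠ 0 := by linarith
    exact (mul_eq_zero.mp hall).resolve_left this
  -- columns of R vanish off the top index
  have hcol : ∀ i, i ≠ i0 → ∀ k, R k i = 0 := by
    intro i hi k
    have hx : star (Pi.single i (1:ℝ)) ⬝ᵥ R *ᵥ Pi.single i 1 = 0 := by
      have : star (Pi.single i (1:ℝ)) ⬝ᵥ R *ᵥ Pi.single i 1 = R i i := by
        simp [dotProduct, mulVec, Pi.single_apply]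
      rw [this, hzero i hi]
    have h0 : R *ᵥ Pi.single i 1 = 0 := (hRPSD.dotProduct_mulVec_zero_iff _).mp hx
    have := congrFun h0 k
    simpa [mulVec, dotProduct, Pi.single_apply] using this
  have hRsymm : ∀ i j, R i j = R j i := by
    intro i j
    have := hRPSD.1
    have h := congrFun (congrFun this.symm i) j
    simpa [conjTranspose_apply] using h
  have hRii0 : R i0 i0 = Ptil := by
    have : ∑ i, R i i = R i0 i0 := by
      rw [Finset.sum_eq_single i0]
      · intro b _ hb; exact hzero b hb
      · intro h; exact absurd (Finset.mem_univ i0) h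
    rw [← hRsum, this]
  have hRall : ∀ i j, (i ≠ i0 ∨ j ≠ i0) → R i j = 0 := by
    intro i j h
    rcases h with h | h
    · rw [hRsymm]; exact hcol i h j
    · exact hcol j h i
  have hRform : R = Ptil • vecMulVec (Pi.single i0 1) (Pi.single i0 1) := by
    ext i j
    by_cases hi : i = i0
    · by_cases hj : j = i0
      · subst hi; subst hj
        simp [vecMulVec_apply, hRii0]
      · rw [hRall i j (Or.inr hj)]
        simp [vecMulVec_apply, Pi.single_apply, hj]
    · rw [hRall i j (Or.inl hi)]
      simp [vecMulVec_apply, Pi.single_apply, hi]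
  -- reconstruct Q
  have hQrec : Q = U * R * star U := by
    rw [hRdef]
    calc Q = (U * star U) * Q * (U * star U) := by rw [hUU, Matrix.one_mul, Matrix.mul_one]
      _ = U * (star U * Q * U) * star U := by simp only [Matrix.mul_assoc]
  have hQform : Q = Ptil • vecMulVec q q := by
    rw [hQrec, hRform]
    rw [Matrix.mul_smul, Matrix.smul_mul]
    have h1 : U *ᵥ Pi.single i0 1 = q := by
      ext k; simp [mulVec, dotProduct, Pi.single_apply, hUq]
    have h2 : (Pi.single i0 1 : Fin n → ℝ) ᵥ* star U = q := by
      ext k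
      simp [vecMul, dotProduct, Pi.single_apply, star_eq_conjTranspose, conjTranspose_apply, hUq]
    rw [aux_mul_vecMulVec, aux_vecMulVec_mul, h1, h2]
  refine ⟨?_, q, hq1, heig, hQform⟩
  -- rank
  have hqne : q ≠ 0 := by
    intro h
    rw [h] at hq1
    simp [dotProduct] at hq1
  have hQne : Q ≠ 0 := by
    intro h
    rw [h] at hQtr
    simp at hQtr
    exact hP.ne' hQtr.symm
  have hle : Q.rank ≤ 1 := by
    have h1 : Q = vecMulVec (Ptil • q) q := by
      rw [hQform]; ext i j; simp [vecMulVec_apply, mul_assoc]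
    rw [h1, vecMulVec_eq Unit]
    calc (replicateCol Unit (Ptil • q) * replicateRow Unit q).rank ≤ (replicateCol Unit (Ptil • q)).rank :=
          rank_mul_le_left _ _
      _ ≤ 1 := by simpa using rank_le_card_width (replicateCol Unit (Ptil • q))
  have hge : 1 ≤ Q.rank := by
    by_contra h
    push_neg at h
    interval_cases hq : Q.rank
    · -- rank zero means Q = 0
      have hbot : LinearMap.range Q.mulVecLin = ⊥ := by
        have := hq
        rw [Matrix.rank] at this
        exact Submodule.finrank_eq_zero.mp this
      have hQ0 : Q.mulVecLin = 0 := LinearMap.range_eq_bot.mp hbot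
      apply hQne
      ext i j
      have := congrFun (LinearMap.congr_fun hQ0 (Pi.single j 1)) i
      simpa [mulVecLin, mulVec, dotProduct, Pi.single_apply] using this
  omega
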